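/- For every n ≥ 5, the complement of the cycle C_n has failed power domination number γ̄_p(C̄_n) = 0; that is, every nonempty subset of vertices of the complement of C_n is a power dominating set. -/

import Mathlib

/-- The closed neighborhood `N[S]` of a set `S` of vertices: `S` together with
all vertices adjacent to a vertex of `S`. -/
def closedNbhdSet {V : Type*} (G : SimpleGraph V) (S : Set V) : Set V :=
  S ∪ {v | ∃ u ∈ S, G.Adj u v}

/-- The monitored sets `P^i(S)` for power domination:
`P^0(S) = N[S]` and
`P^{i+1}(S) = P^i(S) ∪ { w : {w} = N[v] \ P^i(S) for some v ∈ P^i(S) }`. -/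
def monitored {V : Type*} (G : SimpleGraph V) (S : Set V) : ℕ → Set V
  | 0 => closedNbhdSet G S
  | i + 1 => monitored G S i ∪
      {w | ∃ v ∈ monitored G S i,
        (insert v (G.neighborSet v)) \ monitored G S i = {w}}

/-- The zero-forcing sets `Q^i(S)`:
`Q^0(S) = S` and
`Q^{i+1}(S) = Q^i(S) ∪ { w : {w} = N[v] \ Q^i(S) for some v ∈ Q^i(S) }`. -/
def forced {V : Type*} (G : SimpleGraph V) (S : Set V) : ℕ → Set V
  | 0 => S
  | i + 1 => forced G S i ∪
      {w | ∃ v ∈ forced G S i,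
        (insert v (G.neighborSet v)) \ forced G S i = {w}}

/-- `S` is a power dominating set if the monitored sets eventually cover all vertices. -/
def IsPowerDominatingSet {V : Type*} (G : SimpleGraph V) (S : Set V) : Prop :=
  ∃ i, monitored G S i = Set.univ

/-- `S` is a zero forcing set if the forcing process eventually covers all vertices. -/
def IsZeroForcingSet {V : Type*} (G : SimpleGraph V) (S : Set V) : Prop :=
  ∃ i, forced G S i = Set.univ

/-- The failed power domination number: the maximum cardinality of a set of
vertices that is not a power dominating set. -/
noncomputable def failedPowerDominationNumber {V : Type*} (G : SimpleGraph V) : ℕ :=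
  sSup {k | ∃ S : Set V, ¬ IsPowerDominatingSet G S ∧ S.ncard = k}

/-- The failed zero forcing number: the maximum cardinality of a set of
vertices that is not a zero forcing set. -/
noncomputable def failedZeroForcingNumber {V : Type*} (G : SimpleGraph V) : ℕ :=
  sSup {k | ∃ S : Set V, ¬ IsZeroForcingSet G S ∧ S.ncard = k}

theorem failedPowerDominationNumber_compl_cycleGraph (n : ℕ) (hn : 5 ≤ n) :
    failedPowerDominationNumber (SimpleGraph.cycleGraph n)ᶜ = 0 := by
  obtain ⟨m, rfl⟩ : ∃ m, n = m + 5 := ⟨n - 5, by omega⟩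
  letI : CommRing (Fin (m+5)) := Fin.instCommRing (m+5)
  set G := (SimpleGraph.cycleGraph (m+5))ᶜ with hG
  -- small constants are nonzero in Fin (m+5)
  have hk : ∀ k : ℕ, 0 < k → k < m + 5 → (k : Fin (m+5)) ≠ 0 := by
    intro k hk1 hk2 h
    have := congrArg Fin.val h
    rw [Fin.val_cast_of_lt hk2] at this
    simp at this; omega
  have h1 : ((1:ℕ) : Fin (m+5)) ≠ 0 := hk 1 (by omega) (by omega)
  have h2 : ((2:ℕ) : Fin (m+5)) ≠ 0 := hk 2 (by omega) (by omega)
  have h3 : ((3:ℕ) : Fin (m+5)) ≠ 0 := hk 3 (by omega) (by omega)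
  have h4 : ((4:ℕ) : Fin (m+5)) ≠ 0 := hk 4 (by omega) (by omega)
  -- closed neighborhood characterization
  have hNbhd : ∀ u x : Fin (m+5), x ∈ insert u (G.neighborSet u) ↔
      (x - u ≠ 1 ∧ x - u ≠ -1) := by
    intro u x
    have hadj : G.Adj u x ↔ u ≠ x ∧ ¬((SimpleGraph.cycleGraph (m+5)).Adj u x) :=
      SimpleGraph.compl_adj _ _ _
    have hcyc : (SimpleGraph.cycleGraph (m+5)).Adj u x ↔ u - x = 1 ∨ x - u = 1 :=
      SimpleGraph.cycleGraph_adj (n := m+3)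
    simp only [Set.mem_insert_iff, SimpleGraph.mem_neighborSet, hadj, hcyc]
    constructor
    · rintro (rfl | ⟨hne, hnc⟩)
      · constructor
        · intro h; exact h1 (by push_cast; linear_combination -h)
        · intro h; exact h1 (by push_cast; linear_combination h)
      · constructor
        · intro h; exact hnc (Or.inr h)
        · intro h; exact hnc (Or.inl (by linear_combination -h))
    · rintro ⟨ha, hb⟩
      by_cases hxu : x = u
      · exact Or.inl hxu
      · refine Or.inr ⟨fun h => hxu h.symm, ?_⟩
        rintro (h | h)
        · exact hb (by linear_combination -h)
        · exact ha h

  have key : ∀ (S : Set (Fin (m+5))), S.Nonempty → IsPowerDominatingSet G S := by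
    rintro S ⟨v, hv⟩
    refine ⟨1, ?_⟩
    have hP0 : ∀ x : Fin (m+5), x - v ≠ 1 → x - v ≠ -1 → x ∈ monitored G S 0 := by
      intro x hx1 hx2
      have hx := (hNbhd v x).mpr ⟨hx1, hx2⟩
      rcases Set.mem_insert_iff.mp hx with rfl | hadj
      · exact Set.mem_union_left _ hv
      · exact Set.mem_union_right _ ⟨v, hv, hadj⟩
    rw [Set.eq_univ_iff_forall]
    intro w
    by_cases hw0 : w ∈ monitored G S 0
    · exact Set.mem_union_left _ hw0
    have hwd : w - v = 1 ∨ w - v = -1 := by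
      by_contra hcon
      push_neg at hcon
      exact hw0 (hP0 w hcon.1 hcon.2)
    rcases hwd with hd | hd
    · refine Set.mem_union_right _ ⟨v - 2, ?_, ?_⟩
      · exact hP0 _ (fun h => h3 (by push_cast; linear_combination -h))
          (fun h => h1 (by push_cast; linear_combination -h))
      · ext x
        simp only [Set.mem_diff, Set.mem_singleton_iff]
        constructor
        · rintro ⟨hxN, hxP⟩
          have hxd : x - v = 1 ∨ x - v = -1 := by
            by_contra hcon; push_neg at hcon; exact hxP (hP0 x hcon.1 hcon.2)
          rcases hxd with h | h
          · exact (by linear_combination h - hd : x = w)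
          · exact absurd (by linear_combination h : x - (v - 2) = 1)
              ((hNbhd (v-2) x).mp hxN).1
        · rintro rfl
          refine ⟨(hNbhd _ _).mpr ⟨?_, ?_⟩, hw0⟩
          · intro h; exact h2 (by push_cast; linear_combination h - hd)
          · intro h; exact h4 (by push_cast; linear_combination h - hd)
    · refine Set.mem_union_right _ ⟨v + 2, ?_, ?_⟩
      · exact hP0 _ (fun h => h1 (by push_cast; linear_combination h))
          (fun h => h3 (by push_cast; linear_combination h))
      · ext x
        simp only [Set.mem_diff, Set.mem_singleton_iff]
        constructor
        · rintro ⟨hxN, hxP⟩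
          have hxd : x - v = 1 ∨ x - v = -1 := by
            by_contra hcon; push_neg at hcon; exact hxP (hP0 x hcon.1 hcon.2)
          rcases hxd with h | h
          · exact absurd (by linear_combination h : x - (v + 2) = -1)
              ((hNbhd (v+2) x).mp hxN).2
          · exact (by linear_combination h - hd : x = w)
        · rintro rfl
          refine ⟨(hNbhd _ _).mpr ⟨?_, ?_⟩, hw0⟩
          · intro h; exact h4 (by push_cast; linear_combination hd - h)
          · intro h; exact h2 (by push_cast; linear_combination hd - h)
  have hempty : ¬ IsPowerDominatingSet G (∅ : Set (Fin (m+5))) := by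
    rintro ⟨i, hi⟩
    have hmono : ∀ j, monitored G (∅ : Set (Fin (m+5))) j = ∅ := by
      intro j; induction j with
      | zero => simp [monitored, closedNbhdSet]
      | succ j ih => simp [monitored, ih]
    have h0 : (0 : Fin (m+5)) ∈ (∅ : Set (Fin (m+5))) := by
      rw [← hmono i, hi]; trivial
    exact h0
  have hset : {k | ∃ S : Set (Fin (m+5)), ¬ IsPowerDominatingSet G S ∧ S.ncard = k}
      = {0} := by
    ext k
    simp only [Set.mem_setOf_eq, Set.mem_singleton_iff]
    constructor
    · rintro ⟨S, hS, rfl⟩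
      rcases S.eq_empty_or_nonempty with rfl | hne
      · simp
      · exact absurd (key S hne) hS
    · rintro rfl; exact ⟨∅, hempty, by simp⟩
  unfold failedPowerDominationNumber
  rw [hset]
  exact csSup_singleton 0
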